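/- Let M be a finite MDP with alarm region, let x_0 ∉ X_a be the initial state, and let Δ ∈ [0,1]. Then the supremum of J_M(π) over all history-dependent policies π of M satisfying P^π(∃ t ∈ {0,…,T}: X_t ∈ X_a) ≤ Δ equals the supremum of Ĵ(π̂) over all Markov policies π̂ of the binary augmented MDP M̂ satisfying P^π̂(Y_T = 1) ≤ Δ. -/

import Mathlib

set_option maxHeartbeats 1000000


/- Common framework: finite MDPs with alarm region, trajectories,
   history-dependent policies, trajectory laws, objectives. -/

attribute [local instance] Classical.propDecidable

noncomputable section

/-- A finite MDP with alarm region `Xa`, horizon `T ≥ 1`, transition pmf `P`,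
running rewards `r` and terminal reward `rT`. -/
structure MDP (X A : Type) [Fintype X] [Fintype A] where
  T : ℕ
  hT : 1 ≤ T
  P : X → A → X → ℝ
  P_nonneg : ∀ x a x', 0 ≤ P x a x'
  P_sum : ∀ x a, ∑ x', P x a x' = 1
  r : Fin T → X → A → ℝ
  rT : X → ℝ
  Xa : Set X

variable {X A : Type} [Fintype X] [Fintype A]

/-- A trajectory `(x₀,…,x_T, a₀,…,a_{T-1})`. -/
abbrev Traj (M : MDP X A) := (Fin (M.T + 1) → X) × (Fin M.T → A)

/-- A history-dependent randomized policy: at each time `t < T` it maps the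
history `(x₀,…,x_t, a₀,…,a_{t-1})` to a pmf on actions. -/
structure HistPolicy (M : MDP X A) where
  π : (t : Fin M.T) → (Fin (t.val + 1) → X) → (Fin t.val → A) → A → ℝ
  nonneg : ∀ t xs as a, 0 ≤ π t xs as a
  sum_one : ∀ t xs as, ∑ a, π t xs as a = 1

/-- A policy is Markov if at each time it depends only on the current state. -/
def IsMarkov {M : MDP X A} (p : HistPolicy M) : Prop :=
  ∀ (t : Fin M.T) (xs xs' : Fin (t.val + 1) → X) (as as' : Fin t.val → A),
    xs (Fin.last t.val) = xs' (Fin.last t.val) → p.π t xs as = p.π t xs' as'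

/-- The state part of the history at time `t` determined by a trajectory. -/
def histStates {M : MDP X A} (τ : Traj M) (t : Fin M.T) : Fin (t.val + 1) → X :=
  fun i => τ.1 (Fin.castLE (by have := t.isLt; omega) i)

/-- The action part of the history at time `t` determined by a trajectory. -/
def histActs {M : MDP X A} (τ : Traj M) (t : Fin M.T) : Fin t.val → A :=
  fun i => τ.2 (Fin.castLE (by have := t.isLt; omega) i)

/-- The probability mass of a trajectory under policy `p` with initial state `x0`. -/
def trajProb (M : MDP X A) (p : HistPolicy M) (x0 : X) (τ : Traj M) : ℝ :=
  (if τ.1 0 = x0 then (1 : ℝ) else 0) *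
    ∏ t : Fin M.T,
      p.π t (histStates τ t) (histActs τ t) (τ.2 t) *
        M.P (τ.1 t.castSucc) (τ.2 t) (τ.1 t.succ)

/-- Probability of an event (a set of trajectories) under the trajectory law. -/
def probEvent (M : MDP X A) (p : HistPolicy M) (x0 : X) (E : Traj M → Prop) : ℝ :=
  ∑ τ : Traj M, if E τ then trajProb M p x0 τ else 0

/-- The objective `J_M(π) = E[Σ_t r_t(X_t,A_t) + r_T(X_T)]`. -/
def J (M : MDP X A) (p : HistPolicy M) (x0 : X) : ℝ :=
  ∑ τ : Traj M, trajProb M p x0 τ *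
    (∑ t : Fin M.T, M.r t (τ.1 t.castSucc) (τ.2 t) + M.rT (τ.1 (Fin.last M.T)))

/-- The binary augmented MDP: the extra `Bool` state records whether an alarm
has been triggered so far. -/
def binAug (M : MDP X A) : MDP (X × Bool) A where
  T := M.T
  hT := M.hT
  P := fun s a s' =>
    if s'.2 = (s.2 || decide (s'.1 ∈ M.Xa)) then M.P s.1 a s'.1 else 0
  P_nonneg := by
    intro s a s'
    try dsimp only
    split
    · exact M.P_nonneg s.1 a s'.1
    · exact le_refl 0
  P_sum := by
    intro s a
    rw [Fintype.sum_prod_type]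
    have h : ∀ x' : X,
        (∑ y : Bool, if y = (s.2 || decide (x' ∈ M.Xa)) then M.P s.1 a x' else 0)
          = M.P s.1 a x' := by
      intro x'; simp
    rw [Finset.sum_congr rfl fun x' _ => h x']
    exact M.P_sum s.1 a
  r := fun t s a => M.r t s.1 a
  rT := fun s => M.rT s.1
  Xa := {s | s.1 ∈ M.Xa}


/-! ### Auxiliary development -/

section Aux

variable {X A : Type} [Fintype X] [Fintype A]

/-- Sum over `Fin (n+1) → α` via `snoc` decomposition. -/
lemma sum_snoc {α : Type} [Fintype α] {n : ℕ} (f : (Fin (n + 1) → α) → ℝ) :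
    ∑ xs : Fin (n + 1) → α, f xs = ∑ y : α, ∑ xs : Fin n → α, f (Fin.snoc xs y) := by
  have b : Function.Bijective (fun p : α × (Fin n → α) => (Fin.snoc p.2 p.1 : Fin (n+1) → α)) := by
    constructor
    · intro p q h
      have h1 : ∀ i : Fin n, p.2 i = q.2 i := by
        intro i
        have := congrFun h i.castSucc
        simpa using this
      have h2 : p.1 = q.1 := by
        have := congrFun h (Fin.last n)
        simpa using this
      exact Prod.ext h2 (funext h1)
    · intro xs
      exact ⟨(xs (Fin.last n), fun i => xs i.castSucc), by
        funext i
        refine Fin.lastCases ?_ ?_ i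
        · simp
        · intro j; simp⟩
  calc ∑ xs : Fin (n + 1) → α, f xs
      = ∑ p : α × (Fin n → α), f (Fin.snoc p.2 p.1) :=
        (Fintype.sum_bijective _ b _ _ (fun p => rfl)).symm
    _ = ∑ y : α, ∑ xs : Fin n → α, f (Fin.snoc xs y) := Fintype.sum_prod_type _

/-- Probability of a history of length `n` (states `x₀,…,x_n`, actions `a₀,…,a_{n-1}`). -/
def hprob (M : MDP X A) (p : HistPolicy M) (x0 : X) (n : ℕ) (hn : n ≤ M.T)
    (xs : Fin (n + 1) → X) (as : Fin n → A) : ℝ :=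
  (if xs 0 = x0 then (1 : ℝ) else 0) *
    ∏ t : Fin n,
      p.π ⟨t.val, lt_of_lt_of_le t.isLt hn⟩
          (fun i => xs (Fin.castLE (Nat.succ_le_succ (Nat.le_of_lt t.isLt)) i))
          (fun i => as (Fin.castLE (Nat.le_of_lt t.isLt) i)) (as t) *
        M.P (xs t.castSucc) (as t) (xs t.succ)

lemma hprob_nonneg (M : MDP X A) (p : HistPolicy M) (x0 : X) (n : ℕ) (hn : n ≤ M.T)
    (xs : Fin (n + 1) → X) (as : Fin n → A) : 0 ≤ hprob M p x0 n hn xs as := by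
  refine mul_nonneg (by positivity) (Finset.prod_nonneg fun t _ => mul_nonneg (p.nonneg _ _ _ _) (M.P_nonneg _ _ _))

lemma hprob_top (M : MDP X A) (p : HistPolicy M) (x0 : X)
    (xs : Fin (M.T + 1) → X) (as : Fin M.T → A) :
    hprob M p x0 M.T le_rfl xs as = trajProb M p x0 (xs, as) := rfl

lemma hprob_succ (M : MDP X A) (p : HistPolicy M) (x0 : X) (n : ℕ) (hn : n + 1 ≤ M.T)
    (xs : Fin (n + 2) → X) (as : Fin (n + 1) → A) :
    hprob M p x0 (n + 1) hn xs as =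
      hprob M p x0 n (by omega) (fun i => xs i.castSucc) (fun i => as i.castSucc) *
        (p.π ⟨n, hn⟩ (fun i => xs i.castSucc) (fun i => as i.castSucc) (as (Fin.last n)) *
          M.P (xs (Fin.last n).castSucc) (as (Fin.last n)) (xs (Fin.last (n + 1)))) := by
  unfold hprob
  rw [Fin.prod_univ_castSucc, ← mul_assoc]
  simp only [Fin.castSucc_zero]
  exact congrArg₂ _ (congrArg _ (Finset.prod_congr rfl fun t _ => rfl)) rfl

end Aux

section Occ

variable {X A : Type} [Fintype X] [Fintype A]

lemma sum_comm4 {α β γ δ : Type} [Fintype α] [Fintype β] [Fintype γ] [Fintype δ]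
    (f : α → β → γ → δ → ℝ) :
    ∑ a, ∑ b, ∑ c, ∑ d, f a b c d = ∑ b, ∑ d, ∑ c, ∑ a, f a b c d := by
  calc ∑ a, ∑ b, ∑ c, ∑ d, f a b c d
      = ∑ b, ∑ a, ∑ c, ∑ d, f a b c d := Finset.sum_comm
    _ = ∑ b, ∑ d, ∑ c, ∑ a, f a b c d := by
        refine Finset.sum_congr rfl fun b _ => ?_
        calc ∑ a, ∑ c, ∑ d, f a b c d
            = ∑ a, ∑ d, ∑ c, f a b c d :=
              Finset.sum_congr rfl fun a _ => Finset.sum_comm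
          _ = ∑ d, ∑ a, ∑ c, f a b c d := Finset.sum_comm
          _ = ∑ d, ∑ c, ∑ a, f a b c d :=
              Finset.sum_congr rfl fun d _ => Finset.sum_comm

lemma sum_comm3 {α β γ : Type} [Fintype α] [Fintype β] [Fintype γ]
    (f : α → β → γ → ℝ) :
    ∑ a, ∑ b, ∑ c, f a b c = ∑ c, ∑ b, ∑ a, f a b c := by
  calc ∑ a, ∑ b, ∑ c, f a b c
      = ∑ a, ∑ c, ∑ b, f a b c := Finset.sum_congr rfl fun a _ => Finset.sum_comm
    _ = ∑ c, ∑ a, ∑ b, f a b c := Finset.sum_comm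
    _ = ∑ c, ∑ b, ∑ a, f a b c := Finset.sum_congr rfl fun c _ => Finset.sum_comm

lemma sum_comm4' {α β γ δ : Type} [Fintype α] [Fintype β] [Fintype γ] [Fintype δ]
    (f : α → β → γ → δ → ℝ) :
    ∑ a, ∑ b, ∑ c, ∑ d, f a b c d = ∑ c, ∑ d, ∑ b, ∑ a, f a b c d := by
  calc ∑ a, ∑ b, ∑ c, ∑ d, f a b c d
      = ∑ c, ∑ b, ∑ a, ∑ d, f a b c d := sum_comm3 _
    _ = ∑ c, ∑ d, ∑ b, ∑ a, f a b c d := by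
        refine Finset.sum_congr rfl fun c _ => ?_
        calc ∑ b, ∑ a, ∑ d, f a b c d
            = ∑ b, ∑ d, ∑ a, f a b c d := Finset.sum_congr rfl fun b _ => Finset.sum_comm
          _ = ∑ d, ∑ b, ∑ a, f a b c d := Finset.sum_comm

variable (M : MDP X A) (p : HistPolicy M) (x0 : X)

/-- Key decomposition: a sum over histories of length `n+1` factors through
histories of length `n`. -/
lemma sum_hprob_succ (n : ℕ) (hn : n + 1 ≤ M.T)
    (F : (Fin (n + 2) → X) → (Fin (n + 1) → A) → ℝ) :
    ∑ xs : Fin (n + 2) → X, ∑ as : Fin (n + 1) → A, hprob M p x0 (n + 1) hn xs as * F xs as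
    = ∑ xs : Fin (n + 1) → X, ∑ as : Fin n → A,
        hprob M p x0 n (Nat.le_of_succ_le hn) xs as *
          (∑ b : A, p.π ⟨n, hn⟩ xs as b *
            ∑ y : X, M.P (xs (Fin.last n)) b y * F (Fin.snoc xs y) (Fin.snoc as b)) := by
  have e1 : ∀ (y : X) (xs : Fin (n + 1) → X),
      (∑ as : Fin (n + 1) → A, hprob M p x0 (n + 1) hn (Fin.snoc xs y) as *
        F (Fin.snoc xs y) as)
      = ∑ b : A, ∑ as : Fin n → A, hprob M p x0 n (Nat.le_of_succ_le hn) xs as *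
          (p.π ⟨n, hn⟩ xs as b *
            (M.P (xs (Fin.last n)) b y * F (Fin.snoc xs y) (Fin.snoc as b))) := by
    intro y xs
    rw [sum_snoc (fun as : Fin (n + 1) → A =>
      hprob M p x0 (n + 1) hn (Fin.snoc xs y) as * F (Fin.snoc xs y) as)]
    refine Finset.sum_congr rfl fun b _ => Finset.sum_congr rfl fun as _ => ?_
    rw [hprob_succ]
    have hxs : (fun i : Fin (n + 1) => (Fin.snoc xs y : Fin (n + 2) → X) i.castSucc) = xs :=
      funext fun i => Fin.snoc_castSucc ..
    have has : (fun i : Fin n => (Fin.snoc as b : Fin (n + 1) → A) i.castSucc) = as :=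
      funext fun i => Fin.snoc_castSucc ..
    rw [hxs, has]
    simp only [Fin.snoc_last, Fin.snoc_castSucc]
    ring
  calc ∑ xs : Fin (n + 2) → X, ∑ as : Fin (n + 1) → A,
        hprob M p x0 (n + 1) hn xs as * F xs as
      = ∑ y : X, ∑ xs : Fin (n + 1) → X, ∑ b : A, ∑ as : Fin n → A,
          hprob M p x0 n (Nat.le_of_succ_le hn) xs as *
            (p.π ⟨n, hn⟩ xs as b *
              (M.P (xs (Fin.last n)) b y * F (Fin.snoc xs y) (Fin.snoc as b))) := by
        rw [sum_snoc]
        exact Finset.sum_congr rfl fun y _ => Finset.sum_congr rfl fun xs _ => e1 y xs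
    _ = ∑ xs : Fin (n + 1) → X, ∑ as : Fin n → A, ∑ b : A, ∑ y : X,
          hprob M p x0 n (Nat.le_of_succ_le hn) xs as *
            (p.π ⟨n, hn⟩ xs as b *
              (M.P (xs (Fin.last n)) b y * F (Fin.snoc xs y) (Fin.snoc as b))) :=
        sum_comm4 _
    _ = _ := by simp only [Finset.mul_sum]

/-- Prefix of the state part of a trajectory. -/
def prefX (n : ℕ) (hn : n ≤ M.T) (τ : Traj M) : Fin (n + 1) → X :=
  fun i => τ.1 (Fin.castLE (Nat.succ_le_succ hn) i)

/-- Prefix of the action part of a trajectory. -/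
def prefA (n : ℕ) (hn : n ≤ M.T) (τ : Traj M) : Fin n → A :=
  fun i => τ.2 (Fin.castLE hn i)

/-- Tail lemma: expectations of prefix-measurable functions reduce to history sums. -/
lemma sum_traj_prefix :
    ∀ (k n : ℕ) (hn : n ≤ M.T), M.T - n = k →
      ∀ g : (Fin (n + 1) → X) → (Fin n → A) → ℝ,
      ∑ τ : Traj M, trajProb M p x0 τ * g (prefX M n hn τ) (prefA M n hn τ)
      = ∑ xs : Fin (n + 1) → X, ∑ as : Fin n → A, hprob M p x0 n hn xs as * g xs as := by
  intro k
  induction k with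
  | zero =>
    intro n hn hk g
    have : n = M.T := by omega
    subst this
    exact Fintype.sum_prod_type _
  | succ k ih =>
    intro n hn hk g
    have hn1 : n + 1 ≤ M.T := by omega
    have step :
        ∑ τ : Traj M, trajProb M p x0 τ * g (prefX M n hn τ) (prefA M n hn τ)
        = ∑ τ : Traj M, trajProb M p x0 τ *
            (fun xs as => g (fun i => xs (Fin.castSucc i)) (fun i => as (Fin.castSucc i)))
              (prefX M (n + 1) hn1 τ) (prefA M (n + 1) hn1 τ) := rfl
    rw [step, ih (n + 1) hn1 (by omega)
      (fun xs as => g (fun i => xs (Fin.castSucc i)) (fun i => as (Fin.castSucc i))),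
      sum_hprob_succ M p x0 n hn1
      (fun xs as => g (fun i => xs (Fin.castSucc i)) (fun i => as (Fin.castSucc i)))]
    refine Finset.sum_congr rfl fun xs _ => Finset.sum_congr rfl fun as _ => ?_
    have hxs : ∀ y : X,
        (fun i : Fin (n + 1) => (Fin.snoc xs y : Fin (n + 2) → X) i.castSucc) = xs :=
      fun y => funext fun i => Fin.snoc_castSucc ..
    have has : ∀ b : A,
        (fun i : Fin n => (Fin.snoc as b : Fin (n + 1) → A) i.castSucc) = as :=
      fun b => funext fun i => Fin.snoc_castSucc ..
    have : (∑ b : A, p.π ⟨n, hn1⟩ xs as b *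
        ∑ y : X, M.P (xs (Fin.last n)) b y *
          g (fun i => (Fin.snoc xs y : Fin (n + 2) → X) i.castSucc)
            (fun i => (Fin.snoc as b : Fin (n + 1) → A) i.castSucc)) = g xs as := by
      have : ∀ b : A, (∑ y : X, M.P (xs (Fin.last n)) b y *
          g (fun i => (Fin.snoc xs y : Fin (n + 2) → X) i.castSucc)
            (fun i => (Fin.snoc as b : Fin (n + 1) → A) i.castSucc)) = g xs as := by
        intro b
        calc (∑ y : X, M.P (xs (Fin.last n)) b y *
            g (fun i => (Fin.snoc xs y : Fin (n + 2) → X) i.castSucc)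
              (fun i => (Fin.snoc as b : Fin (n + 1) → A) i.castSucc))
            = ∑ y : X, M.P (xs (Fin.last n)) b y * g xs as := by
              refine Finset.sum_congr rfl fun y _ => ?_
              rw [hxs y, has b]
          _ = g xs as := by rw [← Finset.sum_mul, M.P_sum, one_mul]
      calc (∑ b : A, p.π ⟨n, hn1⟩ xs as b *
          ∑ y : X, M.P (xs (Fin.last n)) b y *
            g (fun i => (Fin.snoc xs y : Fin (n + 2) → X) i.castSucc)
              (fun i => (Fin.snoc as b : Fin (n + 1) → A) i.castSucc))
          = ∑ b : A, p.π ⟨n, hn1⟩ xs as b * g xs as := by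
            refine Finset.sum_congr rfl fun b _ => ?_
            rw [this b]
        _ = g xs as := by rw [← Finset.sum_mul, p.sum_one, one_mul]
    rw [this]

/-- State distribution at time `n`. -/
def sd (n : ℕ) (hn : n ≤ M.T) (x : X) : ℝ :=
  ∑ xs : Fin (n + 1) → X, ∑ as : Fin n → A,
    hprob M p x0 n hn xs as * (if xs (Fin.last n) = x then 1 else 0)

/-- State-action occupancy at time `n`. -/
def oc (n : ℕ) (hn : n < M.T) (x : X) (a : A) : ℝ :=
  ∑ xs : Fin (n + 1) → X, ∑ as : Fin n → A,
    hprob M p x0 n (Nat.le_of_lt hn) xs as *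
      (if xs (Fin.last n) = x then p.π ⟨n, hn⟩ xs as a else 0)

lemma oc_nonneg (n : ℕ) (hn : n < M.T) (x : X) (a : A) : 0 ≤ oc M p x0 n hn x a := by
  refine Finset.sum_nonneg fun xs _ => Finset.sum_nonneg fun as _ => mul_nonneg
    (hprob_nonneg ..) ?_
  split
  · exact p.nonneg _ _ _ _
  · exact le_rfl

lemma sum_oc_eq_sd (n : ℕ) (hn : n < M.T) (x : X) :
    ∑ a : A, oc M p x0 n hn x a = sd M p x0 n (Nat.le_of_lt hn) x := by
  unfold oc sd
  rw [Finset.sum_comm]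
  refine Finset.sum_congr rfl fun xs _ => ?_
  rw [Finset.sum_comm]
  refine Finset.sum_congr rfl fun as _ => ?_
  rw [← Finset.mul_sum]
  congr 1
  split_ifs
  · exact p.sum_one _ _ _
  · simp

/-- Sum of occupancies against a weight function. -/
lemma sum_oc (n : ℕ) (hn : n < M.T) (W : X → A → ℝ) :
    ∑ x : X, ∑ a : A, oc M p x0 n hn x a * W x a
    = ∑ xs : Fin (n + 1) → X, ∑ as : Fin n → A,
        hprob M p x0 n (Nat.le_of_lt hn) xs as *
          (∑ b : A, p.π ⟨n, hn⟩ xs as b * W (xs (Fin.last n)) b) := by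
  unfold oc
  simp only [Finset.sum_mul, Finset.mul_sum]
  rw [sum_comm4' (fun (x : X) (a : A) (xs : Fin (n+1) → X) (as : Fin n → A) =>
    hprob M p x0 n (Nat.le_of_lt hn) xs as *
      (if xs (Fin.last n) = x then p.π ⟨n, hn⟩ xs as a else 0) * W x a)]
  refine Finset.sum_congr rfl fun xs _ => Finset.sum_congr rfl fun as _ =>
    Finset.sum_congr rfl fun b _ => ?_
  rw [Finset.sum_eq_single (xs (Fin.last n))]
  · simp [mul_assoc, mul_left_comm]
  · intro x _ hx
    simp [Ne.symm hx]
  · intro h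
    exact absurd (Finset.mem_univ _) h

lemma sd_succ (n : ℕ) (hn : n + 1 ≤ M.T) (x' : X) :
    sd M p x0 (n + 1) hn x' = ∑ x : X, ∑ a : A, oc M p x0 n hn x a * M.P x a x' := by
  rw [sum_oc]
  unfold sd
  rw [sum_hprob_succ M p x0 n hn (fun xs as => if xs (Fin.last (n + 1)) = x' then 1 else 0)]
  refine Finset.sum_congr rfl fun xs _ => Finset.sum_congr rfl fun as _ => ?_
  congr 1
  refine Finset.sum_congr rfl fun b _ => ?_
  congr 1
  rw [Finset.sum_eq_single x']
  · simp
  · intro y _ hy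
    simp [Fin.snoc_last, hy]
  · intro h
    exact absurd (Finset.mem_univ _) h

lemma sd_nonneg (n : ℕ) (hn : n ≤ M.T) (x : X) : 0 ≤ sd M p x0 n hn x := by
  refine Finset.sum_nonneg fun xs _ => Finset.sum_nonneg fun as _ => mul_nonneg
    (hprob_nonneg ..) ?_
  split <;> norm_num

lemma oc_eq_zero (n : ℕ) (hn : n < M.T) (x : X)
    (h : sd M p x0 n (Nat.le_of_lt hn) x = 0) (a : A) : oc M p x0 n hn x a = 0 := by
  have hsum : ∑ a : A, oc M p x0 n hn x a = 0 := by rw [sum_oc_eq_sd]; exact h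
  have := (Finset.sum_eq_zero_iff_of_nonneg
    (fun a _ => oc_nonneg M p x0 n hn x a)).mp hsum
  exact this a (Finset.mem_univ a)

end Occ

section Markovize

variable {X A : Type} [Fintype X] [Fintype A] [Nonempty A]

variable (M : MDP X A) (p : HistPolicy M) (x0 : X)

/-- The Markov action-distribution induced by the occupancies of `p`. -/
def mpol (t : Fin M.T) (x : X) (a : A) : ℝ :=
  if sd M p x0 t.val (Nat.le_of_lt t.isLt) x = 0 then
    (if a = Classical.arbitrary A then 1 else 0)
  else oc M p x0 t.val t.isLt x a / sd M p x0 t.val (Nat.le_of_lt t.isLt) x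

/-- The Markov policy induced by the occupancies of `p`. -/
def markovize : HistPolicy M where
  π := fun t xs _ a => mpol M p x0 t (xs (Fin.last t.val)) a
  nonneg := by
    intro t xs as a
    unfold mpol
    split
    · split <;> norm_num
    · exact div_nonneg (oc_nonneg ..) (sd_nonneg ..)
  sum_one := by
    intro t xs as
    unfold mpol
    by_cases h : sd M p x0 t.val (Nat.le_of_lt t.isLt) (xs (Fin.last t.val)) = 0
    · simp only [if_pos h]
      simp
    · simp only [if_neg h]
      rw [← Finset.sum_div, sum_oc_eq_sd, div_self h]

lemma markovize_isMarkov : IsMarkov (markovize M p x0) := by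
  intro t xs xs' as as' h
  funext a
  show mpol M p x0 t (xs (Fin.last t.val)) a = mpol M p x0 t (xs' (Fin.last t.val)) a
  rw [h]

lemma oc_markovize (n : ℕ) (hn : n < M.T)
    (hsd : ∀ x, sd M (markovize M p x0) x0 n (Nat.le_of_lt hn) x
      = sd M p x0 n (Nat.le_of_lt hn) x) (x : X) (a : A) :
    oc M (markovize M p x0) x0 n hn x a = oc M p x0 n hn x a := by
  have key : oc M (markovize M p x0) x0 n hn x a
      = mpol M p x0 ⟨n, hn⟩ x a * sd M (markovize M p x0) x0 n (Nat.le_of_lt hn) x := by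
    unfold oc sd
    rw [Finset.mul_sum]
    refine Finset.sum_congr rfl fun xs _ => ?_
    rw [Finset.mul_sum]
    refine Finset.sum_congr rfl fun as _ => ?_
    by_cases h : xs (Fin.last n) = x
    · rw [if_pos h, if_pos h, mul_one]
      rw [show (markovize M p x0).π ⟨n, hn⟩ xs as a
        = mpol M p x0 ⟨n, hn⟩ (xs (Fin.last n)) a from rfl, h]
      ring
    · rw [if_neg h, if_neg h]
      ring
  rw [key, hsd x]
  by_cases hz : sd M p x0 n (Nat.le_of_lt hn) x = 0
  · rw [hz, mul_zero, oc_eq_zero M p x0 n hn x hz a]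
  · show mpol M p x0 ⟨n, hn⟩ x a * _ = _
    unfold mpol
    rw [if_neg hz, div_mul_cancel₀ _ hz]

lemma sd_markovize : ∀ (n : ℕ) (hn : n ≤ M.T) (x : X),
    sd M (markovize M p x0) x0 n hn x = sd M p x0 n hn x := by
  intro n
  induction n with
  | zero =>
    intro hn x
    unfold sd
    refine Finset.sum_congr rfl fun xs _ => Finset.sum_congr rfl fun as _ => ?_
    congr 1
  | succ n ihn =>
    intro hn x
    rw [sd_succ, sd_succ]
    refine Finset.sum_congr rfl fun y _ => Finset.sum_congr rfl fun a _ => ?_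
    rw [oc_markovize M p x0 n hn (fun z => ihn (Nat.le_of_lt hn) z)]

lemma oc_markovize' (n : ℕ) (hn : n < M.T) (x : X) (a : A) :
    oc M (markovize M p x0) x0 n hn x a = oc M p x0 n hn x a :=
  oc_markovize M p x0 n hn (fun z => sd_markovize M p x0 n (Nat.le_of_lt hn) z) x a

/-- Weighted sums against the state distribution. -/
lemma sum_sd (n : ℕ) (hn : n ≤ M.T) (W : X → ℝ) :
    ∑ x : X, sd M p x0 n hn x * W x
    = ∑ xs : Fin (n + 1) → X, ∑ as : Fin n → A,
        hprob M p x0 n hn xs as * W (xs (Fin.last n)) := by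
  unfold sd
  simp only [Finset.sum_mul]
  rw [sum_comm3 (fun (x : X) (xs : Fin (n+1) → X) (as : Fin n → A) =>
    hprob M p x0 n hn xs as * (if xs (Fin.last n) = x then 1 else 0) * W x)]
  rw [Finset.sum_comm]
  refine Finset.sum_congr rfl fun xs _ => Finset.sum_congr rfl fun as _ => ?_
  rw [Finset.sum_eq_single (xs (Fin.last n))]
  · simp
  · intro x _ hx
    simp [Ne.symm hx]
  · intro h
    exact absurd (Finset.mem_univ _) h

/-- The objective in terms of occupancies. -/
lemma J_eq_occ : J M p x0
    = (∑ t : Fin M.T, ∑ x : X, ∑ a : A, oc M p x0 t.val t.isLt x a * M.r t x a)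
      + ∑ x : X, sd M p x0 M.T le_rfl x * M.rT x := by
  unfold J
  simp only [mul_add, Finset.mul_sum, Finset.sum_add_distrib]
  congr 1
  · rw [Finset.sum_comm]
    refine Finset.sum_congr rfl fun t _ => ?_
    have ht : t.val + 1 ≤ M.T := t.isLt
    calc ∑ τ : Traj M, trajProb M p x0 τ * M.r t (τ.1 t.castSucc) (τ.2 t)
        = ∑ xs : Fin (t.val + 2) → X, ∑ as : Fin (t.val + 1) → A,
            hprob M p x0 (t.val + 1) ht xs as *
              M.r t (xs (Fin.last t.val).castSucc) (as (Fin.last t.val)) :=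
          sum_traj_prefix M p x0 (M.T - (t.val + 1)) (t.val + 1) ht rfl
            (fun xs as => M.r t (xs (Fin.last t.val).castSucc) (as (Fin.last t.val)))
      _ = ∑ xs : Fin (t.val + 1) → X, ∑ as : Fin t.val → A,
            hprob M p x0 t.val (Nat.le_of_succ_le ht) xs as *
              (∑ b : A, p.π ⟨t.val, ht⟩ xs as b *
                ∑ y : X, M.P (xs (Fin.last t.val)) b y *
                  M.r t ((Fin.snoc xs y : Fin (t.val + 2) → X) (Fin.last t.val).castSucc)
                    ((Fin.snoc as b : Fin (t.val + 1) → A) (Fin.last t.val))) :=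
          sum_hprob_succ M p x0 t.val ht _
      _ = ∑ xs : Fin (t.val + 1) → X, ∑ as : Fin t.val → A,
            hprob M p x0 t.val (Nat.le_of_succ_le ht) xs as *
              (∑ b : A, p.π ⟨t.val, ht⟩ xs as b * M.r t (xs (Fin.last t.val)) b) := by
          refine Finset.sum_congr rfl fun xs _ => Finset.sum_congr rfl fun as _ => ?_
          congr 1
          refine Finset.sum_congr rfl fun b _ => ?_
          congr 1
          simp only [Fin.snoc_last, Fin.snoc_castSucc]
          rw [← Finset.sum_mul, M.P_sum, one_mul]
      _ = ∑ x : X, ∑ a : A, oc M p x0 t.val t.isLt x a * M.r t x a :=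
          (sum_oc M p x0 t.val t.isLt (M.r t)).symm
  · calc ∑ τ : Traj M, trajProb M p x0 τ * M.rT (τ.1 (Fin.last M.T))
        = ∑ xs : Fin (M.T + 1) → X, ∑ as : Fin M.T → A,
            hprob M p x0 M.T le_rfl xs as * M.rT (xs (Fin.last M.T)) :=
          sum_traj_prefix M p x0 0 M.T le_rfl (by omega)
            (fun xs as => M.rT (xs (Fin.last M.T)))
      _ = ∑ x : X, sd M p x0 M.T le_rfl x * M.rT x := (sum_sd M p x0 M.T le_rfl M.rT).symm

/-- Probability of an event depending only on the final state. -/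
lemma probEvent_final (S : X → Prop) :
    probEvent M p x0 (fun τ => S (τ.1 (Fin.last M.T)))
    = ∑ x : X, sd M p x0 M.T le_rfl x * (if S x then 1 else 0) := by
  unfold probEvent
  calc ∑ τ : Traj M, (if S (τ.1 (Fin.last M.T)) then trajProb M p x0 τ else 0)
      = ∑ τ : Traj M, trajProb M p x0 τ * (if S (τ.1 (Fin.last M.T)) then 1 else 0) := by
        refine Finset.sum_congr rfl fun τ _ => ?_
        split_ifs <;> ring
    _ = ∑ xs : Fin (M.T + 1) → X, ∑ as : Fin M.T → A,
          hprob M p x0 M.T le_rfl xs as * (if S (xs (Fin.last M.T)) then 1 else 0) :=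
        sum_traj_prefix M p x0 0 M.T le_rfl (by omega)
          (fun xs as => if S (xs (Fin.last M.T)) then 1 else 0)
    _ = _ := (sum_sd M p x0 M.T le_rfl (fun x => if S x then 1 else 0)).symm

/-- Markovization: a Markov policy with the same objective and the same
final-state event probabilities. -/
theorem exists_markov_policy :
    ∃ q : HistPolicy M, IsMarkov q ∧ J M q x0 = J M p x0 ∧
      ∀ S : X → Prop, probEvent M q x0 (fun τ => S (τ.1 (Fin.last M.T)))
        = probEvent M p x0 (fun τ => S (τ.1 (Fin.last M.T))) := by
  refine ⟨markovize M p x0, markovize_isMarkov M p x0, ?_, ?_⟩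
  · rw [J_eq_occ, J_eq_occ]
    congr 1
    · refine Finset.sum_congr rfl fun t _ => Finset.sum_congr rfl fun x _ =>
        Finset.sum_congr rfl fun a _ => ?_
      rw [oc_markovize']
    · refine Finset.sum_congr rfl fun x _ => ?_
      rw [sd_markovize]
  · intro S
    rw [probEvent_final, probEvent_final]
    refine Finset.sum_congr rfl fun x _ => ?_
    rw [sd_markovize]

end Markovize

section Lift

variable {X A : Type} [Fintype X] [Fintype A]

lemma sum_fun_pair {ι α β : Type} [Fintype ι] [Fintype α] [Fintype β]
    [Fintype (ι → α × β)] [Fintype (ι → α)] [Fintype (ι → β)]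
    (g : (ι → α × β) → ℝ) :
    ∑ f : ι → α × β, g f = ∑ u : ι → α, ∑ v : ι → β, g (fun i => (u i, v i)) := by
  have hb : Function.Bijective
      (fun w : (ι → α) × (ι → β) => (fun i => (w.1 i, w.2 i) : ι → α × β)) :=
    (Equiv.arrowProdEquivProdArrow ι (fun _ => α) (fun _ => β)).symm.bijective
  calc ∑ f : ι → α × β, g f
      = ∑ w : (ι → α) × (ι → β), g (fun i => (w.1 i, w.2 i)) :=
        (Fintype.sum_bijective _ hb _ _ (fun w => rfl)).symm
    _ = _ := Fintype.sum_prod_type _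

lemma probEvent_eq_sum (M : MDP X A) (p : HistPolicy M) (x0 : X) (E : Traj M → Prop) :
    probEvent M p x0 E = ∑ τ : Traj M, trajProb M p x0 τ * (if E τ then 1 else 0) := by
  unfold probEvent
  refine Finset.sum_congr rfl fun τ _ => ?_
  split_ifs <;> ring

/-- Attach the canonical alarm flags to a state sequence. -/
def liftHist (M : MDP X A) {n : ℕ} (xs : Fin (n + 1) → X) : Fin (n + 1) → X × Bool :=
  fun i => (xs i, decide (∃ j, j ≤ i ∧ xs j ∈ M.Xa))

/-- Lift a trajectory of `M` to the canonical trajectory of `binAug M`. -/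
def liftTraj (M : MDP X A) (τ : Traj M) : Traj (binAug M) :=
  (liftHist M τ.1, τ.2)

lemma liftHist_prefix (M : MDP X A) (τ : Traj M) (t : Fin M.T) :
    histStates (liftTraj M τ) t = liftHist M (histStates τ t) := by
  funext i
  refine Prod.ext rfl ?_
  show decide _ = decide _
  rw [decide_eq_decide]
  constructor
  · rintro ⟨j, hj, hm⟩
    have hji : j.val ≤ i.val := hj
    have hi : i.val < t.val + 1 := i.isLt
    exact ⟨⟨j.val, by omega⟩, by exact hji, hm⟩
  · rintro ⟨j, hj, hm⟩
    have hji : j.val ≤ i.val := hj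
    exact ⟨Fin.castLE (show t.val + 1 ≤ M.T + 1 by have := t.isLt; omega) j, by exact hji, hm⟩

lemma liftHist_succ (M : MDP X A) (xs : Fin (M.T + 1) → X) (t : Fin M.T) :
    (liftHist M xs t.succ).2
      = ((liftHist M xs t.castSucc).2 || decide (xs t.succ ∈ M.Xa)) := by
  show decide _ = _
  rw [show ((liftHist M xs t.castSucc).2 || decide (xs t.succ ∈ M.Xa))
      = decide ((∃ j, j ≤ t.castSucc ∧ xs j ∈ M.Xa) ∨ xs t.succ ∈ M.Xa) by
    show (decide _ || _) = _
    simp]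
  rw [decide_eq_decide]
  constructor
  · rintro ⟨j, hj, hm⟩
    have hji : j.val ≤ t.val + 1 := hj
    rcases Nat.lt_or_ge j.val (t.val + 1) with h | h
    · exact Or.inl ⟨j, by exact Nat.lt_succ_iff.mp h, hm⟩
    · have : j = t.succ := Fin.ext (by simpa using le_antisymm hji h)
      subst this
      exact Or.inr hm
  · rintro (⟨j, hj, hm⟩ | hm)
    · have hji : j.val ≤ t.val := hj
      exact ⟨j, by show j.val ≤ t.val + 1; omega, hm⟩
    · exact ⟨t.succ, le_rfl, hm⟩

lemma liftHist_zero (M : MDP X A) (x0 : X) (hx0 : x0 ∉ M.Xa)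
    (xs : Fin (M.T + 1) → X) (h0 : xs 0 = x0) :
    (liftHist M xs 0).2 = false := by
  show decide _ = false
  simp only [decide_eq_false_iff_not]
  rintro ⟨j, hj, hm⟩
  have : j = 0 := le_antisymm hj (Fin.zero_le j)
  subst this
  rw [h0] at hm
  exact hx0 hm

lemma trajProb_liftTraj (M : MDP X A) (x0 : X) (hx0 : x0 ∉ M.Xa)
    (p : HistPolicy M) (q : HistPolicy (binAug M))
    (hpq : ∀ (t : Fin M.T) (xs : Fin (t.val + 1) → X) (as : Fin t.val → A) (a : A),
      q.π t (liftHist M xs) as a = p.π t xs as a) (τ : Traj M) :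
    trajProb (binAug M) q (x0, false) (liftTraj M τ) = trajProb M p x0 τ := by
  unfold trajProb
  congr 1
  · have hiff : ((liftTraj M τ).1 0 = ((x0, false) : X × Bool)) ↔ τ.1 0 = x0 := by
      constructor
      · intro h
        exact congrArg Prod.fst h
      · intro h
        refine Prod.ext h ?_
        exact liftHist_zero M x0 hx0 τ.1 h
    simp only [hiff]
  · refine Finset.prod_congr rfl fun t _ => ?_
    congr 1
    · rw [show histStates (liftTraj M τ) t = liftHist M (histStates τ t) from
        liftHist_prefix M τ t]
      exact hpq t (histStates τ t) (histActs τ t) (τ.2 t)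
    · show (binAug M).P ((liftTraj M τ).1 t.castSucc) (τ.2 t) ((liftTraj M τ).1 t.succ)
        = M.P (τ.1 t.castSucc) (τ.2 t) (τ.1 t.succ)
      unfold binAug
      dsimp only
      split_ifs with h
      · rfl
      · exact absurd (liftHist_succ M τ.1 t) h
  -- moved

lemma trajProb_vanish (M : MDP X A) (x0 : X) (hx0 : x0 ∉ M.Xa)
    (q : HistPolicy (binAug M)) (u : Fin (M.T + 1) → X) (v : Fin (M.T + 1) → Bool)
    (as : Fin M.T → A)
    (h : trajProb (binAug M) q (x0, false) ((fun i => (u i, v i)), as) ≠ 0) :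
    v = fun i => decide (∃ j, j ≤ i ∧ u j ∈ M.Xa) := by
  unfold trajProb at h
  have h1 := left_ne_zero_of_mul h
  have h2 := right_ne_zero_of_mul h
  have hinit : u 0 = x0 ∧ v 0 = false := by
    by_cases hc : ((fun i => (u i, v i)) : Fin (M.T + 1) → X × Bool) 0 = (x0, false)
    · exact ⟨congrArg Prod.fst hc, congrArg Prod.snd hc⟩
    · exact absurd (if_neg (h := Classical.propDecidable _) hc) h1
  have hrec : ∀ t : Fin M.T, v t.succ = (v t.castSucc || decide (u t.succ ∈ M.Xa)) := by
    intro t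
    have := Finset.prod_ne_zero_iff.mp h2 t (Finset.mem_univ t)
    have hP := right_ne_zero_of_mul this
    by_contra hc
    have : (binAug M).P ((fun i => (u i, v i)) t.castSucc) (as t)
        ((fun i => (u i, v i)) t.succ) = 0 := by
      show (if v t.succ = (v t.castSucc || decide (u t.succ ∈ M.Xa)) then _ else 0) = 0
      rw [if_neg hc]
    exact hP this
  funext i
  induction i using Fin.induction with
  | zero =>
    rw [hinit.2]
    symm
    exact liftHist_zero M x0 hx0 u hinit.1
  | succ t ih =>
    rw [hrec t, ih]
    symm
    exact liftHist_succ M u t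

/-- Correspondence of trajectory sums between `M` and `binAug M`. -/
lemma sum_lift (M : MDP X A) (x0 : X) (hx0 : x0 ∉ M.Xa)
    (p : HistPolicy M) (q : HistPolicy (binAug M))
    (hpq : ∀ (t : Fin M.T) (xs : Fin (t.val + 1) → X) (as : Fin t.val → A) (a : A),
      q.π t (liftHist M xs) as a = p.π t xs as a)
    (F : Traj (binAug M) → ℝ) :
    ∑ σ : Traj (binAug M), trajProb (binAug M) q (x0, false) σ * F σ
    = ∑ τ : Traj M, trajProb M p x0 τ * F (liftTraj M τ) := by
  calc ∑ σ : Traj (binAug M), trajProb (binAug M) q (x0, false) σ * F σ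
      = ∑ f : Fin ((binAug M).T + 1) → X × Bool, ∑ as : Fin (binAug M).T → A,
          trajProb (binAug M) q (x0, false) (f, as) * F (f, as) :=
        Fintype.sum_prod_type _
    _ = ∑ u : Fin ((binAug M).T + 1) → X, ∑ v : Fin ((binAug M).T + 1) → Bool, ∑ as : Fin (binAug M).T → A,
          trajProb (binAug M) q (x0, false) ((fun i => (u i, v i)), as) *
            F ((fun i => (u i, v i)), as) :=
        sum_fun_pair _
    _ = ∑ u : Fin ((binAug M).T + 1) → X, ∑ as : Fin (binAug M).T → A, ∑ v : Fin ((binAug M).T + 1) → Bool,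
          trajProb (binAug M) q (x0, false) ((fun i => (u i, v i)), as) *
            F ((fun i => (u i, v i)), as) :=
        Finset.sum_congr rfl fun u _ => Finset.sum_comm
    _ = ∑ u : Fin ((binAug M).T + 1) → X, ∑ as : Fin (binAug M).T → A,
          trajProb (binAug M) q (x0, false) (liftHist M u, as) * F (liftHist M u, as) := by
        refine Finset.sum_congr rfl fun u _ => Finset.sum_congr rfl fun as _ => ?_
        rw [Finset.sum_eq_single (fun i => decide (∃ j, j ≤ i ∧ u j ∈ M.Xa))]
        · rw [show (fun i => (u i, decide (∃ j, j ≤ i ∧ u j ∈ M.Xa))) = liftHist M u from rfl]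
        · intro v _ hv
          by_cases hz : trajProb (binAug M) q (x0, false) ((fun i => (u i, v i)), as) = 0
          · rw [hz, zero_mul]
          · exact absurd (trajProb_vanish M x0 hx0 q u v as hz) hv
        · intro h
          exact absurd (Finset.mem_univ _) h
    _ = ∑ u : Fin ((binAug M).T + 1) → X, ∑ as : Fin (binAug M).T → A,
          trajProb M p x0 (u, as) * F (liftHist M u, as) := by
        refine Finset.sum_congr rfl fun u _ => Finset.sum_congr rfl fun as _ => ?_
        rw [show trajProb (binAug M) q (x0, false) (liftHist M u, as)
          = trajProb (binAug M) q (x0, false) (liftTraj M (u, as)) from rfl,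
          trajProb_liftTraj M x0 hx0 p q hpq]
    _ = ∑ u : Fin (M.T + 1) → X, ∑ as : Fin M.T → A,
          trajProb M p x0 (u, as) * F (liftTraj M (u, as)) := rfl
    _ = ∑ τ : Traj M, trajProb M p x0 τ * F (liftTraj M τ) :=
        (Fintype.sum_prod_type
          (fun τ : Traj M => trajProb M p x0 τ * F (liftTraj M τ))).symm

/-- The lift has alarm flag set at the end iff the alarm region was visited. -/
lemma liftTraj_alarm (M : MDP X A) (τ : Traj M) :
    ((liftTraj M τ).1 (Fin.last (binAug M).T)).2 = true ↔ ∃ t, τ.1 t ∈ M.Xa := by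
  show decide _ = true ↔ _
  rw [decide_eq_true_iff]
  exact ⟨fun ⟨j, _, hm⟩ => ⟨j, hm⟩, fun ⟨j, hm⟩ => ⟨j, Fin.le_last j, hm⟩⟩

lemma J_lift (M : MDP X A) (x0 : X) (hx0 : x0 ∉ M.Xa)
    (p : HistPolicy M) (q : HistPolicy (binAug M))
    (hpq : ∀ (t : Fin M.T) (xs : Fin (t.val + 1) → X) (as : Fin t.val → A) (a : A),
      q.π t (liftHist M xs) as a = p.π t xs as a) :
    J (binAug M) q (x0, false) = J M p x0 := by
  calc J (binAug M) q (x0, false)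
      = ∑ σ : Traj (binAug M), trajProb (binAug M) q (x0, false) σ *
          ((fun σ => (∑ t, (binAug M).r t (σ.1 t.castSucc) (σ.2 t)
            + (binAug M).rT (σ.1 (Fin.last (binAug M).T)))) σ) := rfl
    _ = ∑ τ : Traj M, trajProb M p x0 τ *
          ((fun σ => (∑ t, (binAug M).r t (σ.1 t.castSucc) (σ.2 t)
            + (binAug M).rT (σ.1 (Fin.last (binAug M).T)))) (liftTraj M τ)) :=
        sum_lift M x0 hx0 p q hpq _
    _ = J M p x0 := Finset.sum_congr rfl fun τ _ => rfl

lemma probEvent_lift (M : MDP X A) (x0 : X) (hx0 : x0 ∉ M.Xa)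
    (p : HistPolicy M) (q : HistPolicy (binAug M))
    (hpq : ∀ (t : Fin M.T) (xs : Fin (t.val + 1) → X) (as : Fin t.val → A) (a : A),
      q.π t (liftHist M xs) as a = p.π t xs as a) :
    probEvent (binAug M) q (x0, false)
        (fun σ => (σ.1 (Fin.last (binAug M).T)).2 = true)
      = probEvent M p x0 (fun τ => ∃ t, τ.1 t ∈ M.Xa) := by
  rw [probEvent_eq_sum, probEvent_eq_sum]
  refine Eq.trans (Eq.trans ?_ (sum_lift M x0 hx0 p q hpq
    (fun σ => if (σ.1 (Fin.last (binAug M).T)).2 = true then 1 else 0))) ?_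
  · refine Finset.sum_congr rfl fun σ _ => ?_
    by_cases h : (σ.1 (Fin.last (binAug M).T)).2 = true <;> simp [h]
  · refine Finset.sum_congr rfl fun τ _ => ?_
    by_cases h : ∃ t, τ.1 t ∈ M.Xa
    · simp [h, (liftTraj_alarm M τ).mpr h]
    · have h2 : ¬ ((liftTraj M τ).1 (Fin.last (binAug M).T)).2 = true :=
        fun hh => h ((liftTraj_alarm M τ).mp hh)
      simp [h, h2]

end Lift

/-- The optimal attack impact over history-dependent policies
under the temporally joint chance constraint equals the optimal impact over
Markov policies of the binary augmented MDP under the final-flag constraint. -/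
theorem impact_hist_eq_binAug_markov [Nonempty X] [Nonempty A]
    (M : MDP X A) (x0 : X) (hx0 : x0 ∉ M.Xa) (Δ : ℝ) (hΔ : Δ ∈ Set.Icc (0 : ℝ) 1) :
    sSup {v : ℝ | ∃ p : HistPolicy M,
        probEvent M p x0 (fun τ => ∃ t, τ.1 t ∈ M.Xa) ≤ Δ ∧ v = J M p x0} =
    sSup {v : ℝ | ∃ q : HistPolicy (binAug M), IsMarkov q ∧
        probEvent (binAug M) q (x0, false)
          (fun σ => (σ.1 (Fin.last (binAug M).T)).2 = true) ≤ Δ ∧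
        v = J (binAug M) q (x0, false)} := by
  apply congrArg sSup
  ext v
  simp only [Set.mem_setOf_eq]
  constructor
  · rintro ⟨p, hcon, hval⟩
    let q0 : HistPolicy (binAug M) :=
      { π := fun t xs as a => p.π t (fun i => (xs i).1) as a
        nonneg := fun t xs as a => p.nonneg t _ as a
        sum_one := fun t xs as => p.sum_one t _ as }
    have hpq : ∀ (t : Fin M.T) (xs : Fin (t.val + 1) → X) (as : Fin t.val → A) (a : A),
        q0.π t (liftHist M xs) as a = p.π t xs as a := fun t xs as a => rfl
    obtain ⟨q, hq, hJ, hPE⟩ := exists_markov_policy (binAug M) q0 (x0, false)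
    refine ⟨q, hq, ?_, ?_⟩
    · have e1 : probEvent (binAug M) q (x0, false)
          (fun σ => (σ.1 (Fin.last (binAug M).T)).2 = true)
          = probEvent (binAug M) q0 (x0, false)
            (fun σ => (σ.1 (Fin.last (binAug M).T)).2 = true) :=
        hPE (fun s : X × Bool => s.2 = true)
      rw [e1, probEvent_lift M x0 hx0 p q0 hpq]
      exact hcon
    · exact hval.trans ((J_lift M x0 hx0 p q0 hpq).symm.trans hJ.symm)
  · rintro ⟨q, hq, hcon, hval⟩
    let p : HistPolicy M :=
      { π := fun t xs as a => q.π t (liftHist M xs) as a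
        nonneg := fun t xs as a => q.nonneg t _ as a
        sum_one := fun t xs as => q.sum_one t _ as }
    have hpq : ∀ (t : Fin M.T) (xs : Fin (t.val + 1) → X) (as : Fin t.val → A) (a : A),
        q.π t (liftHist M xs) as a = p.π t xs as a := fun t xs as a => rfl
    refine ⟨p, ?_, ?_⟩
    · rw [← probEvent_lift M x0 hx0 p q hpq]
      exact hcon
    · rw [hval, J_lift M x0 hx0 p q hpq]

end
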